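/- For every integer m ≥ 1, the finite trigonometric sum ∑_{j=1}^{m-1} 1/sin²(jπ/m) equals (m² - 1)/3. -/

import Mathlib

open Real Finset

/-- `∑_{k<m} (k+1) = m(m+1)/2` over `ℂ`. -/
private lemma sum_aux1 (m : ℕ) :
    ∑ k ∈ Finset.range m, ((k : ℂ) + 1) = m * (m + 1) / 2 := by
  induction m with
  | zero => simp
  | succ n ih => rw [Finset.sum_range_succ, ih]; push_cast; ring

/-- `∑_{k<m} k(k+1) = (m-1)m(m+1)/3` over `ℂ`. -/
private lemma sum_aux2 (m : ℕ) :
    ∑ k ∈ Finset.range m, (k : ℂ) * ((k : ℂ) + 1)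
      = ((m : ℂ) - 1) * m * (m + 1) / 3 := by
  induction m with
  | zero => simp
  | succ n ih => rw [Finset.sum_range_succ, ih]; push_cast; ring

/-- Polynomial identity `(1-x) ∑_{k<m} (k+1) x^k = ∑_{k<m} x^k - m x^m`. -/
private lemma poly_id (x : ℂ) (m : ℕ) :
    (1 - x) * ∑ k ∈ Finset.range m, ((k : ℂ) + 1) * x ^ k
      = (∑ k ∈ Finset.range m, x ^ k) - m * x ^ m := by
  induction m with
  | zero => simp
  | succ n ih =>
    rw [Finset.sum_range_succ, Finset.sum_range_succ, mul_add, ih]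
    push_cast
    ring

/-- Orthogonality: `∑_{k<m} (e^{2πin/m})^k = m` if `m ∣ n` else `0`. -/
private lemma root_sum (m : ℕ) (hm : 0 < m) (n : ℕ) :
    ∑ k ∈ Finset.range m, Complex.exp (2 * π * Complex.I * n / m) ^ k
      = if m ∣ n then (m : ℂ) else 0 := by
  have hm' : (m : ℂ) ≠ 0 := Nat.cast_ne_zero.mpr hm.ne'
  by_cases h : m ∣ n
  · obtain ⟨c, rfl⟩ := h
    have hx : Complex.exp (2 * π * Complex.I * (m * c : ℕ) / m) = 1 := by
      have : (2 * π * Complex.I * (m * c : ℕ) / m) = (c : ℤ) * (2 * π * Complex.I) := by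
        push_cast
        field_simp
      rw [this, Complex.exp_int_mul_two_pi_mul_I]
    rw [hx]
    simp [hm.ne']
  · have hx : Complex.exp (2 * π * Complex.I * n / m) ≠ 1 := by
      intro hc
      rw [Complex.exp_eq_one_iff] at hc
      obtain ⟨t, ht⟩ := hc
      have hπ : (π : ℂ) ≠ 0 := Complex.ofReal_ne_zero.mpr Real.pi_ne_zero
      have : (n : ℂ) = t * m := by
        field_simp at ht
        have h2 : (2 : ℂ) * π * Complex.I ≠ 0 := by
          simp [hπ, Complex.I_ne_zero]
        -- ht : 2 * π * I * n = t * (2 * π * I) * m  (roughly)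
        apply mul_left_cancel₀ h2
        linear_combination (2 * π * Complex.I) * ht
      have : (n : ℤ) = t * m := by exact_mod_cast this
      exact h (Int.natCast_dvd_natCast.mp ⟨t, by linear_combination this⟩)
    rw [geom_sum_eq hx]
    have hxm : Complex.exp (2 * π * Complex.I * n / m) ^ m = 1 := by
      rw [← Complex.exp_nat_mul]
      have : (m : ℂ) * (2 * π * Complex.I * n / m) = (n : ℤ) * (2 * π * Complex.I) := by
        field_simp
        push_cast; ring
      rw [this, Complex.exp_int_mul_two_pi_mul_I]
    rw [hxm]
    simp [h]

/-- Key per-term identity. -/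
private lemma key_term (m : ℕ) (hm : 0 < m) (j : ℕ) (hj : j ∈ Finset.Ico 1 m) :
    ((1 / Real.sin (j * π / m) ^ 2 : ℝ) : ℂ)
      = -4 * Complex.exp (2 * π * Complex.I * j / m)
          * (∑ k ∈ Finset.range m,
              ((k : ℂ) + 1) * Complex.exp (2 * π * Complex.I * j / m) ^ k) ^ 2 / m ^ 2 := by
  rw [Finset.mem_Ico] at hj
  have hm' : (m : ℂ) ≠ 0 := Nat.cast_ne_zero.mpr hm.ne'
  have hmr : (m : ℝ) ≠ 0 := Nat.cast_ne_zero.mpr hm.ne'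
  set θ : ℝ := j * π / m with hθ
  set ζ : ℂ := Complex.exp (2 * π * Complex.I * j / m) with hζ
  set A : ℂ := ∑ k ∈ Finset.range m, ((k : ℂ) + 1) * ζ ^ k with hA
  -- sin θ ≠ 0
  have hθpos : 0 < θ := by
    apply div_pos (mul_pos _ Real.pi_pos) (by exact_mod_cast hm)
    exact_mod_cast hj.1
  have hθlt : θ < π := by
    rw [hθ, div_lt_iff₀ (by exact_mod_cast hm)]
    have : (j : ℝ) < m := by exact_mod_cast hj.2
    nlinarith [Real.pi_pos]
  have hsin : Real.sin θ ≠ 0 := ne_of_gt (Real.sin_pos_of_pos_of_lt_pi hθpos hθlt)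
  have hsinC : Complex.sin θ ≠ 0 := by
    rw [← Complex.ofReal_sin]
    exact_mod_cast hsin
  -- ζ = exp(2θi)
  have harg : (2 * π * Complex.I * j / m : ℂ) = 2 * (θ : ℂ) * Complex.I := by
    rw [hθ]
    push_cast
    ring
  have hζθ : ζ = Complex.exp (2 * (θ : ℂ) * Complex.I) := by rw [hζ, harg]
  -- (1 - ζ)^2 = -4 sin²θ ζ
  have h1 : (1 - ζ) ^ 2 = -4 * Complex.sin θ ^ 2 * ζ := by
    rw [hζθ, Complex.sin]
    have hne : Complex.exp ((θ : ℂ) * Complex.I) ≠ 0 := Complex.exp_ne_zero _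
    have hv : Complex.exp (-(θ : ℂ) * Complex.I) = (Complex.exp ((θ : ℂ) * Complex.I))⁻¹ := by
      rw [← Complex.exp_neg]; ring_nf
    have h2 : Complex.exp (2 * (θ : ℂ) * Complex.I)
        = Complex.exp ((θ : ℂ) * Complex.I) ^ 2 := by
      rw [← Complex.exp_nat_mul]; push_cast; ring_nf
    rw [hv, h2]
    field_simp
    ring_nf
    rw [Complex.I_sq]
    ring
  -- (1 - ζ) * A = -m
  have hζm : ζ ^ m = 1 := by
    rw [hζ, ← Complex.exp_nat_mul]
    have : (m : ℂ) * (2 * π * Complex.I * j / m) = (j : ℤ) * (2 * π * Complex.I) := by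
      field_simp; push_cast; ring
    rw [this, Complex.exp_int_mul_two_pi_mul_I]
  have hgeo : ∑ k ∈ Finset.range m, ζ ^ k = 0 := by
    rw [hζ, root_sum m hm j, if_neg]
    intro hdvd
    exact absurd (Nat.le_of_dvd (by omega) hdvd) (by omega)
  have h3 : (1 - ζ) * A = -(m : ℂ) := by
    rw [hA, poly_id, hgeo, hζm]
    ring
  -- conclude
  have hcast : ((1 / Real.sin θ ^ 2 : ℝ) : ℂ) = 1 / Complex.sin θ ^ 2 := by
    push_cast [Complex.ofReal_sin]
    ring
  rw [hcast]
  have hζ0 : ζ ≠ 0 := Complex.exp_ne_zero _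
  rw [div_eq_div_iff (pow_ne_zero 2 hsinC) (pow_ne_zero 2 hm')]
  linear_combination A ^ 2 * h1 + ((m : ℂ) - (1 - ζ) * A) * h3


/-- The main computation at the complex level. -/
private lemma sum_complex (m : ℕ) (hm : 0 < m) :
    ∑ j ∈ Finset.Ico 1 m,
        -4 * Complex.exp (2 * π * Complex.I * j / m)
          * (∑ k ∈ Finset.range m,
              ((k : ℂ) + 1) * Complex.exp (2 * π * Complex.I * j / m) ^ k) ^ 2 / m ^ 2
      = ((m : ℂ) ^ 2 - 1) / 3 := by
  have hm' : (m : ℂ) ≠ 0 := Nat.cast_ne_zero.mpr hm.ne'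
  -- expand the square into a double sum
  have expand : ∀ j ∈ Finset.Ico 1 m,
      -4 * Complex.exp (2 * π * Complex.I * j / m)
          * (∑ k ∈ Finset.range m,
              ((k : ℂ) + 1) * Complex.exp (2 * π * Complex.I * j / m) ^ k) ^ 2 / m ^ 2
        = (-4 / m ^ 2) * ∑ k ∈ Finset.range m, ∑ l ∈ Finset.range m,
            (((k : ℂ) + 1) * ((l : ℂ) + 1))
              * Complex.exp (2 * π * Complex.I * ((k + l + 1 : ℕ) : ℂ) / m) ^ j := by
    intro j hj
    set ζ : ℂ := Complex.exp (2 * π * Complex.I * j / m) with hζ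
    have hpow : ∀ n : ℕ, Complex.exp (2 * π * Complex.I * (n : ℂ) / m) ^ j = ζ ^ n := by
      intro n
      rw [hζ, ← Complex.exp_nat_mul, ← Complex.exp_nat_mul]
      congr 1
      push_cast
      ring
    have hb : ∑ k ∈ Finset.range m, ∑ l ∈ Finset.range m,
        (((k : ℂ) + 1) * ((l : ℂ) + 1))
          * Complex.exp (2 * π * Complex.I * ((k + l + 1 : ℕ) : ℂ) / m) ^ j
        = (∑ k ∈ Finset.range m, ∑ l ∈ Finset.range m,
            ((k : ℂ) + 1) * ζ ^ k * (((l : ℂ) + 1) * ζ ^ l)) * ζ := by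
      rw [Finset.sum_mul]
      refine Finset.sum_congr rfl fun k _ => ?_
      rw [Finset.sum_mul]
      refine Finset.sum_congr rfl fun l _ => ?_
      rw [hpow (k + l + 1)]
      ring
    rw [hb, sq, Finset.sum_mul_sum]
    ring
  rw [Finset.sum_congr rfl expand, ← Finset.mul_sum, Finset.sum_comm]
  rw [Finset.sum_congr rfl fun k (_ : k ∈ Finset.range m) =>
    (Finset.sum_comm (s := Finset.Ico 1 m) (t := Finset.range m)
      (f := fun j l => (((k : ℂ) + 1) * ((l : ℂ) + 1))
        * Complex.exp (2 * π * Complex.I * ((k + l + 1 : ℕ) : ℂ) / m) ^ j))]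
  -- evaluate the sum over j for each (k, l)
  have jsum : ∀ n : ℕ,
      ∑ j ∈ Finset.Ico 1 m, Complex.exp (2 * π * Complex.I * (n : ℂ) / m) ^ j
        = (if m ∣ n then (m : ℂ) else 0) - 1 := by
    intro n
    have h := Finset.sum_eq_sum_Ico_succ_bot hm
      (fun j => Complex.exp (2 * π * Complex.I * (n : ℂ) / m) ^ j)
    rw [← Finset.range_eq_Ico, root_sum m hm n] at h
    simp only [pow_zero, zero_add] at h
    linear_combination -h
  have inner_eval : ∀ k ∈ Finset.range m,
      ∑ l ∈ Finset.range m, ∑ j ∈ Finset.Ico 1 m,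
          (((k : ℂ) + 1) * ((l : ℂ) + 1))
            * Complex.exp (2 * π * Complex.I * ((k + l + 1 : ℕ) : ℂ) / m) ^ j
        = ((k : ℂ) + 1) * ((m : ℂ) - k) * m - ((k : ℂ) + 1) * ((m : ℂ) * (m + 1) / 2) := by
    intro k hk
    rw [Finset.mem_range] at hk
    have step : ∀ l ∈ Finset.range m,
        ∑ j ∈ Finset.Ico 1 m,
          (((k : ℂ) + 1) * ((l : ℂ) + 1))
            * Complex.exp (2 * π * Complex.I * ((k + l + 1 : ℕ) : ℂ) / m) ^ j
          = (if l = m - 1 - k then ((k : ℂ) + 1) * ((l : ℂ) + 1) * m else 0)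
              - ((k : ℂ) + 1) * ((l : ℂ) + 1) := by
      intro l hl
      rw [Finset.mem_range] at hl
      rw [← Finset.mul_sum, jsum (k + l + 1)]
      by_cases hdvd : m ∣ (k + l + 1)
      · have hcase : l = m - 1 - k := by
          have := Nat.eq_of_dvd_of_lt_two_mul (by omega) hdvd (by omega)
          omega
        rw [if_pos hdvd, if_pos hcase]
        ring
      · have hcase : l ≠ m - 1 - k := by
          intro hc
          exact hdvd ⟨1, by omega⟩
        rw [if_neg hdvd, if_neg hcase]
        ring
    rw [Finset.sum_congr rfl step, Finset.sum_sub_distrib]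
    rw [Finset.sum_ite_eq' (Finset.range m) (m - 1 - k)
      (fun l => ((k : ℂ) + 1) * ((l : ℂ) + 1) * m)]
    rw [if_pos (Finset.mem_range.mpr (by omega))]
    have hcast : ((m - 1 - k : ℕ) : ℂ) + 1 = (m : ℂ) - k := by
      have h1 : (m - 1 - k) + (k + 1) = m := by omega
      have h2 := congrArg (fun t : ℕ => (t : ℂ)) h1
      push_cast at h2
      linear_combination h2
    rw [hcast]
    have : ∑ l ∈ Finset.range m, ((k : ℂ) + 1) * ((l : ℂ) + 1)
        = ((k : ℂ) + 1) * ((m : ℂ) * (m + 1) / 2) := by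
      rw [← Finset.mul_sum, sum_aux1]
    rw [this]
  rw [Finset.sum_congr rfl inner_eval]
  -- final polynomial computation
  have split : ∀ k ∈ Finset.range m,
      ((k : ℂ) + 1) * ((m : ℂ) - k) * m - ((k : ℂ) + 1) * ((m : ℂ) * (m + 1) / 2)
        = ((m : ℂ) ^ 2 - (m : ℂ) * (m + 1) / 2) * ((k : ℂ) + 1)
            + (-(m : ℂ)) * ((k : ℂ) * ((k : ℂ) + 1)) := by
    intro k _
    ring
  rw [Finset.sum_congr rfl split, Finset.sum_add_distrib, ← Finset.mul_sum, ← Finset.mul_sum,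
    sum_aux1, sum_aux2]
  field_simp
  ring

theorem sum_one_div_sin_sq (m : ℕ) (hm : 1 ≤ m) :
    ∑ j ∈ Finset.Ico 1 m, 1 / (Real.sin (j * Real.pi / m)) ^ 2
      = ((m : ℝ) ^ 2 - 1) / 3 := by
  have hm0 : 0 < m := hm
  apply Complex.ofReal_injective
  rw [Complex.ofReal_sum]
  rw [Finset.sum_congr rfl (key_term m hm0), sum_complex m hm0]
  push_cast
  ring
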